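/- Let W be SupCon-like for a partition of {1,…,n} into C classes of sizes ℓ_1,…,ℓ_C ≥ 2, let τ > 0, and let 𝒮₀ be the set of n×n matrices of the form G/τ with G symmetric positive semidefinite with unit diagonal. Then for every S ∈ 𝒮₀ there exists S' ∈ 𝒮₀ which is W-symmetric and satisfies L_W(S') ≤ L_W(S). -/

import Mathlib

open scoped BigOperators

/-- The weighted InfoNCE loss. -/
noncomputable def infoNCE {n : ℕ} (W S : Matrix (Fin n) (Fin n) ℝ) : ℝ :=
  -(1 / (n : ℝ)) * ∑ i : Fin n, ∑ j ∈ Finset.univ.erase i,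
    (W i j / ∑ k ∈ Finset.univ.erase i, W i k) *
      Real.log (Real.exp (S i j) / ∑ k ∈ Finset.univ.erase i, Real.exp (S i k))

/-- The entropic lower bound (with the convention `0 * log 0 = 0`,
which holds automatically since `Real.log 0 = 0`). -/
noncomputable def entropicBound {n : ℕ} (W : Matrix (Fin n) (Fin n) ℝ) : ℝ :=
  -(1 / (n : ℝ)) * ∑ i : Fin n, ∑ j ∈ Finset.univ.erase i,
    (W i j / ∑ k ∈ Finset.univ.erase i, W i k) *
      Real.log (W i j / ∑ k ∈ Finset.univ.erase i, W i k)


/-- SupCon-like weight matrix for the class assignment `cls`: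
`w_{ij} = 1` if `i` and `j` are in the same class and `0` otherwise. -/
def supconW {n C : ℕ} (cls : Fin n → Fin C) : Matrix (Fin n) (Fin n) ℝ :=
  Matrix.of fun i j => if cls i = cls j then 1 else 0

/-- Action of a permutation on a matrix: `(σX)_{ij} = X_{σ(i)σ(j)}`. -/
def permMat {n : ℕ} (σ : Equiv.Perm (Fin n)) (X : Matrix (Fin n) (Fin n) ℝ) :
    Matrix (Fin n) (Fin n) ℝ :=
  Matrix.of fun i j => X (σ i) (σ j)

/-- `S` is `W`-symmetric: every permutation fixing `W` fixes `S`. -/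
def WSymmetric {n : ℕ} (W S : Matrix (Fin n) (Fin n) ℝ) : Prop :=
  ∀ σ : Equiv.Perm (Fin n), permMat σ W = W → permMat σ S = S

/-- The size of class `c` under the assignment `cls`. -/
def classSize {n C : ℕ} (cls : Fin n → Fin C) (c : Fin C) : ℕ :=
  (Finset.univ.filter fun i => cls i = c).card

/-- The set `𝒮₀` of matrices of the form `G/τ` with `G` symmetric PSD with unit
diagonal (i.e. a cosine matrix). -/
def gramSet (n : ℕ) (τ : ℝ) : Set (Matrix (Fin n) (Fin n) ℝ) :=
  {S | ∃ G : Matrix (Fin n) (Fin n) ℝ,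
    G.PosSemidef ∧ (∀ i, G i i = 1) ∧ S = τ⁻¹ • G}

/-- The set `𝒮` of matrices of the form `G/τ` with `G` symmetric PSD with unit
diagonal and rank at most `q`. -/
def gramSetRank (n q : ℕ) (τ : ℝ) : Set (Matrix (Fin n) (Fin n) ℝ) :=
  {S | ∃ G : Matrix (Fin n) (Fin n) ℝ,
    G.PosSemidef ∧ (∀ i, G i i = 1) ∧ G.rank ≤ q ∧ S = τ⁻¹ • G}

/-! ### Auxiliary lemmas -/

lemma permMat_permMat {n : ℕ} (σ π : Equiv.Perm (Fin n)) (X : Matrix (Fin n) (Fin n) ℝ) :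
    permMat π (permMat σ X) = permMat (σ * π) X := rfl

lemma permMat_one {n : ℕ} (X : Matrix (Fin n) (Fin n) ℝ) :
    permMat (1 : Equiv.Perm (Fin n)) X = X := rfl

lemma sum_erase_perm {n : ℕ} (σ : Equiv.Perm (Fin n)) (i : Fin n) (f : Fin n → ℝ) :
    ∑ k ∈ Finset.univ.erase (σ i), f k = ∑ k ∈ Finset.univ.erase i, f (σ k) :=
  (Finset.sum_equiv σ (by simp) (fun _ _ => rfl)).symm

/-- Invariance of the loss under permutations fixing `W`. -/
lemma infoNCE_perm {n : ℕ} (W S : Matrix (Fin n) (Fin n) ℝ) (σ : Equiv.Perm (Fin n))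
    (hW : permMat σ W = W) :
    infoNCE W (permMat σ S) = infoNCE W S := by
  have hWp : ∀ i j, W (σ i) (σ j) = W i j := fun i j => congrFun (congrFun hW i) j
  unfold infoNCE
  congr 1
  rw [← Equiv.sum_comp σ (fun i => ∑ j ∈ Finset.univ.erase i,
    (W i j / ∑ k ∈ Finset.univ.erase i, W i k) *
      Real.log (Real.exp (S i j) / ∑ k ∈ Finset.univ.erase i, Real.exp (S i k)))]
  refine Finset.sum_congr rfl fun i _ => ?_
  simp only [permMat, Matrix.of_apply]
  simp only [sum_erase_perm σ i, hWp]

lemma convexOn_lse {κ : Type*} (t : Finset κ) (ht : t.Nonempty) :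
    ConvexOn ℝ Set.univ (fun v : κ → ℝ => Real.log (∑ k ∈ t, Real.exp (v k))) := by
  refine ⟨convex_univ, fun x _ y _ a b ha hb hab => ?_⟩
  set P := ∑ k ∈ t, Real.exp (x k) with hPdef
  set Q := ∑ k ∈ t, Real.exp (y k) with hQdef
  have hP : 0 < P := Finset.sum_pos (fun _ _ => Real.exp_pos _) ht
  have hQ : 0 < Q := Finset.sum_pos (fun _ _ => Real.exp_pos _) ht
  have key : ∑ k ∈ t, Real.exp ((a • x + b • y) k) ≤ P ^ a * Q ^ b := by
    have step : ∀ k ∈ t, Real.exp ((a • x + b • y) k)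
        ≤ P ^ a * Q ^ b * (a * (Real.exp (x k) / P) + b * (Real.exp (y k) / Q)) := by
      intro k _
      have hgm := Real.geom_mean_le_arith_mean2_weighted ha hb
        (div_nonneg (Real.exp_pos (x k)).le hP.le) (div_nonneg (Real.exp_pos (y k)).le hQ.le) hab
      have hexp : Real.exp ((a • x + b • y) k)
          = (Real.exp (x k)) ^ a * (Real.exp (y k)) ^ b := by
        simp only [Pi.add_apply, Pi.smul_apply, smul_eq_mul]
        rw [Real.exp_add, mul_comm a (x k), mul_comm b (y k), Real.exp_mul, Real.exp_mul]
      rw [hexp]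
      calc (Real.exp (x k)) ^ a * (Real.exp (y k)) ^ b
          = (P ^ a * Q ^ b) * ((Real.exp (x k) / P) ^ a * (Real.exp (y k) / Q) ^ b) := by
            rw [Real.div_rpow (Real.exp_pos _).le hP.le,
              Real.div_rpow (Real.exp_pos _).le hQ.le]
            have hPa : (P : ℝ) ^ a ≠ 0 := (Real.rpow_pos_of_pos hP a).ne'
            have hQb : (Q : ℝ) ^ b ≠ 0 := (Real.rpow_pos_of_pos hQ b).ne'
            field_simp
        _ ≤ (P ^ a * Q ^ b) * (a * (Real.exp (x k) / P) + b * (Real.exp (y k) / Q)) :=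
            mul_le_mul_of_nonneg_left hgm (by positivity)
    calc ∑ k ∈ t, Real.exp ((a • x + b • y) k)
        ≤ ∑ k ∈ t, P ^ a * Q ^ b * (a * (Real.exp (x k) / P) + b * (Real.exp (y k) / Q)) :=
          Finset.sum_le_sum step
      _ = P ^ a * Q ^ b := by
          rw [← Finset.mul_sum]
          have : ∑ k ∈ t, (a * (Real.exp (x k) / P) + b * (Real.exp (y k) / Q)) = 1 := by
            rw [Finset.sum_add_distrib]
            simp only [div_eq_mul_inv, ← Finset.mul_sum]
            rw [← Finset.sum_mul, ← Finset.sum_mul, ← hPdef, ← hQdef,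
              mul_inv_cancel₀ hP.ne', mul_inv_cancel₀ hQ.ne', mul_one, mul_one, hab]
          rw [this, mul_one]
  have hpos : 0 < ∑ k ∈ t, Real.exp ((a • x + b • y) k) :=
    Finset.sum_pos (fun _ _ => Real.exp_pos _) ht
  have hlog := Real.log_le_log hpos key
  calc Real.log (∑ k ∈ t, Real.exp ((a • x + b • y) k))
      ≤ Real.log (P ^ a * Q ^ b) := hlog
    _ = a * Real.log P + b * Real.log Q := by
        rw [Real.log_mul (Real.rpow_pos_of_pos hP a).ne' (Real.rpow_pos_of_pos hQ b).ne',
          Real.log_rpow hP, Real.log_rpow hQ]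
    _ = a • Real.log P + b • Real.log Q := by simp [smul_eq_mul]

lemma convexOn_finset_sum {E : Type*} [AddCommMonoid E] [Module ℝ E] {ι : Type*}
    (t : Finset ι) {f : ι → E → ℝ} (h : ∀ i ∈ t, ConvexOn ℝ Set.univ (f i)) :
    ConvexOn ℝ Set.univ (fun x => ∑ i ∈ t, f i x) := by
  classical
  induction t using Finset.induction_on with
  | empty => simpa using convexOn_const (0 : ℝ) convex_univ
  | @insert a s hs ih =>
    simp only [Finset.sum_insert hs]
    exact (h a (Finset.mem_insert_self a s)).add
      (ih fun i hi => h i (Finset.mem_insert_of_mem hi))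

lemma convexOn_term {n : ℕ} (i j : Fin n) (c : ℝ) (hc : 0 ≤ c)
    (ht : (Finset.univ.erase i).Nonempty) :
    ConvexOn ℝ Set.univ (fun S : Matrix (Fin n) (Fin n) ℝ =>
      c * (Real.log (∑ k ∈ Finset.univ.erase i, Real.exp (S i k)) - S i j)) := by
  have h1 : ConvexOn ℝ Set.univ (fun S : Matrix (Fin n) (Fin n) ℝ =>
      Real.log (∑ k ∈ Finset.univ.erase i, Real.exp (S i k))) := by
    refine ⟨convex_univ, fun X _ Y _ a b ha hb hab => ?_⟩
    have h2 := (convexOn_lse (Finset.univ.erase i) ht).2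
      (Set.mem_univ (X i)) (Set.mem_univ (Y i)) ha hb hab
    simpa [Matrix.add_apply, Matrix.smul_apply, smul_eq_mul] using h2
  have h2 : ConvexOn ℝ Set.univ (fun S : Matrix (Fin n) (Fin n) ℝ => -S i j) := by
    refine ⟨convex_univ, fun X _ Y _ a b ha hb hab => le_of_eq ?_⟩
    simp [Matrix.add_apply, Matrix.smul_apply, smul_eq_mul]
    ring
  have h3 := (h1.add h2).smul hc
  refine ⟨convex_univ, fun X hX Y hY a b ha hb hab => ?_⟩
  have := h3.2 hX hY ha hb hab
  simpa [Pi.add_apply, smul_eq_mul, sub_eq_add_neg] using this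

/-- The loss rewritten as a sum of convex building blocks (valid for `n ≥ 2`). -/
lemma infoNCE_eq {n : ℕ} (hn : 2 ≤ n) (W S : Matrix (Fin n) (Fin n) ℝ) :
    infoNCE W S = ∑ i : Fin n, ∑ j ∈ Finset.univ.erase i,
      ((1 / (n : ℝ)) * (W i j / ∑ k ∈ Finset.univ.erase i, W i k)) *
        (Real.log (∑ k ∈ Finset.univ.erase i, Real.exp (S i k)) - S i j) := by
  have hne : ∀ i : Fin n, (Finset.univ.erase i).Nonempty := by
    intro i
    rw [← Finset.card_pos, Finset.card_erase_of_mem (Finset.mem_univ i)]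
    simp only [Finset.card_univ, Fintype.card_fin]
    omega
  unfold infoNCE
  rw [Finset.mul_sum]
  refine Finset.sum_congr rfl fun i _ => ?_
  rw [Finset.mul_sum]
  refine Finset.sum_congr rfl fun j _ => ?_
  have hP : 0 < ∑ k ∈ Finset.univ.erase i, Real.exp (S i k) :=
    Finset.sum_pos (fun _ _ => Real.exp_pos _) (hne i)
  rw [Real.log_div (Real.exp_ne_zero _) hP.ne', Real.log_exp]
  ring

lemma posSemidef_smul' {n : ℕ} {M : Matrix (Fin n) (Fin n) ℝ} (hM : M.PosSemidef)
    {c : ℝ} (hc : 0 ≤ c) : (c • M).PosSemidef := by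
  constructor
  · have h := hM.1
    unfold Matrix.IsHermitian at h ⊢
    rw [Matrix.conjTranspose_smul, h]
    congr 1
  · intro x
    exact (hM.smul hc).2 x

lemma posSemidef_sum' {n : ℕ} {ι : Type*} (t : Finset ι)
    (f : ι → Matrix (Fin n) (Fin n) ℝ) (h : ∀ i ∈ t, (f i).PosSemidef) :
    (∑ i ∈ t, f i).PosSemidef := by
  classical
  induction t using Finset.induction_on with
  | empty => simpa using Matrix.PosSemidef.zero
  | @insert a s hs ih =>
    rw [Finset.sum_insert hs]
    have hA := h a (Finset.mem_insert_self a s)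
    have hB := ih fun i hi => h i (Finset.mem_insert_of_mem hi)
    exact ⟨hA.1.add hB.1, fun x => by
      simpa [mul_add, add_mul] using add_nonneg (hA.2 x) (hB.2 x)⟩

lemma permMat_sum {n : ℕ} {ι : Type*} (π : Equiv.Perm (Fin n)) (t : Finset ι)
    (f : ι → Matrix (Fin n) (Fin n) ℝ) :
    permMat π (∑ σ ∈ t, f σ) = ∑ σ ∈ t, permMat π (f σ) := by
  ext i j
  simp [permMat, Matrix.sum_apply]

lemma permMat_smul {n : ℕ} (π : Equiv.Perm (Fin n)) (c : ℝ)
    (X : Matrix (Fin n) (Fin n) ℝ) : permMat π (c • X) = c • permMat π X := rfl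

/-- symmetrization: for every `S ∈ 𝒮₀` there is a `W`-symmetric
`S' ∈ 𝒮₀` with `L_W(S') ≤ L_W(S)`. -/
theorem statement12 {n C : ℕ} (cls : Fin n → Fin C)
    (hsize : ∀ c : Fin C, 2 ≤ classSize cls c)
    (τ : ℝ) (hτ : 0 < τ) (S : Matrix (Fin n) (Fin n) ℝ) (hS : S ∈ gramSet n τ) :
    ∃ S' ∈ gramSet n τ, WSymmetric (supconW cls) S' ∧
      infoNCE (supconW cls) S' ≤ infoNCE (supconW cls) S := by
  classical
  by_cases hn : n = 0
  · subst hn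
    refine ⟨S, hS, fun σ _ => ?_, le_refl _⟩
    ext i j
    exact i.elim0
  have hn2 : 2 ≤ n := by
    have i0 : Fin n := ⟨0, Nat.pos_of_ne_zero hn⟩
    have h1 := hsize (cls i0)
    have h2 : classSize cls (cls i0) ≤ n := by
      unfold classSize
      calc (Finset.univ.filter fun i => cls i = cls i0).card ≤ Finset.univ.card :=
            Finset.card_filter_le _ _
        _ = n := by simp
    omega
  have hne : ∀ i : Fin n, (Finset.univ.erase i).Nonempty := by
    intro i
    rw [← Finset.card_pos, Finset.card_erase_of_mem (Finset.mem_univ i)]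
    simp only [Finset.card_univ, Fintype.card_fin]
    omega
  set W := supconW cls with hWdef
  obtain ⟨G, hG, hGdiag, rfl⟩ := hS
  set S0 : Matrix (Fin n) (Fin n) ℝ := τ⁻¹ • G with hS0def
  set H : Finset (Equiv.Perm (Fin n)) :=
    Finset.univ.filter (fun σ => permMat σ W = W) with hHdef
  have hmemH : ∀ σ : Equiv.Perm (Fin n), σ ∈ H ↔ permMat σ W = W := by
    intro σ; simp [hHdef]
  have h1H : (1 : Equiv.Perm (Fin n)) ∈ H := (hmemH 1).2 (permMat_one W)
  have hHcard : 0 < H.card := Finset.card_pos.2 ⟨1, h1H⟩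
  set a : ℝ := (H.card : ℝ)⁻¹ with hadef
  have ha : 0 ≤ a := inv_nonneg.2 (Nat.cast_nonneg _)
  have hacard : (H.card : ℝ) * a = 1 := by
    rw [hadef, mul_inv_cancel₀]
    exact_mod_cast hHcard.ne'
  have hsum1 : ∑ _σ ∈ H, a = 1 := by
    rw [Finset.sum_const, nsmul_eq_mul, hacard]
  set S' : Matrix (Fin n) (Fin n) ℝ := ∑ σ ∈ H, a • permMat σ S0 with hS'def
  -- membership in gramSet
  have hmem : S' ∈ gramSet n τ := by
    refine ⟨∑ σ ∈ H, a • permMat σ G, ?_, ?_, ?_⟩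
    · refine posSemidef_sum' H _ fun σ _ => posSemidef_smul' ?_ ha
      exact hG.submatrix σ
    · intro i
      rw [Matrix.sum_apply]
      calc ∑ σ ∈ H, (a • permMat σ G) i i = ∑ σ ∈ H, a := by
            refine Finset.sum_congr rfl fun σ _ => ?_
            simp [permMat, hGdiag]
        _ = 1 := hsum1
    · ext i j
      simp only [hS'def, Matrix.sum_apply, Matrix.smul_apply, smul_eq_mul, Finset.mul_sum]
      refine Finset.sum_congr rfl fun σ _ => ?_
      simp only [permMat, Matrix.of_apply, hS0def, Matrix.smul_apply, smul_eq_mul]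
      ring
  -- W-symmetry
  have hWsymm : WSymmetric W S' := by
    intro π hπ
    have hπ' : π ∈ H := (hmemH π).2 hπ
    have hπinv : permMat π⁻¹ W = W := by
      conv_lhs => rw [← hπ]
      rw [permMat_permMat, mul_inv_cancel, permMat_one]
    rw [hS'def, permMat_sum]
    have hterm : ∀ σ, permMat π (a • permMat σ S0) = a • permMat (σ * π) S0 := by
      intro σ
      rw [permMat_smul, permMat_permMat]
    simp only [hterm]
    refine Finset.sum_nbij' (fun σ => σ * π) (fun ρ => ρ * π⁻¹) ?_ ?_ ?_ ?_ ?_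
    · intro σ hσ
      refine (hmemH _).2 ?_
      rw [← permMat_permMat, (hmemH σ).1 hσ, hπ]
    · intro ρ hρ
      refine (hmemH _).2 ?_
      rw [← permMat_permMat, (hmemH ρ).1 hρ, hπinv]
    · intro σ _; group
    · intro ρ _; group
    · intro σ _; rfl
  -- convexity and Jensen
  have hconv : ConvexOn ℝ Set.univ (infoNCE W) := by
    have heq : infoNCE W = fun X : Matrix (Fin n) (Fin n) ℝ =>
        ∑ i : Fin n, ∑ j ∈ Finset.univ.erase i,
          ((1 / (n : ℝ)) * (W i j / ∑ k ∈ Finset.univ.erase i, W i k)) *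
            (Real.log (∑ k ∈ Finset.univ.erase i, Real.exp (X i k)) - X i j) :=
      funext fun X => infoNCE_eq hn2 W X
    rw [heq]
    refine convexOn_finset_sum _ fun i _ => ?_
    refine convexOn_finset_sum _ fun j _ => ?_
    refine convexOn_term i j _ ?_ (hne i)
    have hWnn : ∀ p q, 0 ≤ W p q := by
      intro p q
      simp only [hWdef, supconW, Matrix.of_apply]
      split <;> norm_num
    have hden : 0 ≤ ∑ k ∈ Finset.univ.erase i, W i k :=
      Finset.sum_nonneg fun k _ => hWnn i k
    exact mul_nonneg (by positivity) (div_nonneg (hWnn i j) hden)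
  have hjen := hconv.map_sum_le (t := H) (w := fun _ => a)
    (p := fun σ => permMat σ S0) (fun _ _ => ha) hsum1 (fun _ _ => Set.mem_univ _)
  have hvals : ∑ σ ∈ H, a * infoNCE W (permMat σ S0) = infoNCE W S0 := by
    calc ∑ σ ∈ H, a * infoNCE W (permMat σ S0) = ∑ σ ∈ H, a * infoNCE W S0 := by
          refine Finset.sum_congr rfl fun σ hσ => ?_
          rw [infoNCE_perm W S0 σ ((hmemH σ).1 hσ)]
      _ = infoNCE W S0 := by
          rw [Finset.sum_const, nsmul_eq_mul, ← mul_assoc, hacard, one_mul]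
  exact ⟨S', hmem, hWsymm, by calc infoNCE W S' ≤ ∑ σ ∈ H, a * infoNCE W (permMat σ S0) := hjen
    _ = infoNCE W S0 := hvals⟩
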